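/- arXiv:1411.0456 — 2 statements merged into one kernel-verified Lean document; each statement's English description precedes it below -/
import Mathlib

section
/- Let p be a prime, e ≥ 1, fe the minimal natural number with e ≤ p^fe(p−1), and m, N integers with m ≥ 2N + fe + 1 and N ≥ 1. Then for any integer l with |l| ≥ p^(m−fe−⌊(N+1)/e⌋), the quantity c = l − e·(q − α(q))/(p−1) with q = ⌊l/p^m⌋ satisfies c ≥ N + 1. -/
theorem stmt4 (p e fe m N l : ℕ) (hp : p.Prime) (he : 1 ≤ e)
    (hfe : e ≤ p ^ fe * (p - 1)) (hmin : ∀ n : ℕ, e ≤ p ^ n * (p - 1) → fe ≤ n)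
    (hN : 1 ≤ N) (hm : 2 * N + fe + 1 ≤ m)
    (hl : p ^ (m - fe - (N + 1) / e) ≤ l) :
    (N : ℤ) + 1 ≤ (l : ℤ) - e * padicValNat p (Nat.factorial (l / p ^ m)) := by
  haveI : Fact p.Prime := ⟨hp⟩
  have hp2 : 2 ≤ p := hp.two_le
  set q := l / p ^ m with hq
  set v := padicValNat p (Nat.factorial q) with hv
  have key : e * v + (N + 1) ≤ l := by
    -- Step 1: e * v ≤ p ^ fe * q
    have h1 : (p - 1) * v = q - (p.digits q).sum := sub_one_mul_padicValNat_factorial q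
    have h2 : e * v ≤ p ^ fe * q := by
      have : (p - 1) * (e * v) ≤ (p - 1) * (p ^ fe * q) := by
        calc (p - 1) * (e * v) = e * ((p - 1) * v) := by ring
          _ = e * (q - (p.digits q).sum) := by rw [h1]
          _ ≤ e * q := Nat.mul_le_mul_left e (Nat.sub_le _ _)
          _ ≤ p ^ fe * (p - 1) * q := Nat.mul_le_mul_right q hfe
          _ = (p - 1) * (p ^ fe * q) := by ring
      exact Nat.le_of_mul_le_mul_left this (by omega)
    -- Step 2: p ^ fe * q ≤ l / p ^ (m - fe)
    have hfm : fe ≤ m := by omega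
    have h3 : p ^ fe * q ≤ l / p ^ (m - fe) := by
      have hsplit : p ^ m = p ^ (m - fe) * p ^ fe := by
        rw [← pow_add]; congr 1; omega
      rw [hq, hsplit, ← Nat.div_div_eq_div_mul]
      exact Nat.mul_div_le _ _
    -- Step 3: l / p ^ (m - fe) ≤ l / 2 ^ (N + 1)
    have h4 : l / p ^ (m - fe) ≤ l / 2 ^ (N + 1) := by
      apply Nat.div_le_div_left _ (by positivity)
      calc 2 ^ (N + 1) ≤ p ^ (N + 1) := Nat.pow_le_pow_left hp2 _
        _ ≤ p ^ (m - fe) := Nat.pow_le_pow_right (by omega) (by omega)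
    -- Step 4: l ≥ 2 ^ N
    have h5 : 2 ^ N ≤ l := by
      calc 2 ^ N ≤ p ^ N := Nat.pow_le_pow_left hp2 _
        _ ≤ p ^ (m - fe - (N + 1) / e) := by
            apply Nat.pow_le_pow_right (by omega)
            have := Nat.div_le_self (N + 1) e
            omega
        _ ≤ l := hl
    -- Step 5: conclude l / 2 ^ (N+1) + (N+1) ≤ l
    have h6 : l / 2 ^ (N + 1) + (N + 1) ≤ l := by
      set t := l / 2 ^ (N + 1) with ht
      have htl : t * 2 ^ (N + 1) ≤ l := Nat.div_mul_le_self l _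
      have hpow : N + 2 ≤ 2 ^ (N + 1) := by
        have := Nat.lt_two_pow_self (n := N + 1); omega
      have hpN : N + 1 ≤ 2 ^ N := by
        have := Nat.lt_two_pow_self (n := N); omega
      rcases Nat.eq_zero_or_pos t with h | h
      · omega
      · nlinarith [htl, h, hpow]
    omega
  have : (e : ℤ) * v + (N + 1) ≤ l := by exact_mod_cast key
  linarith
end

section
/- Let F be a coherent sheaf on a Noetherian scheme which is reflexive (F ≅ F**) over a regular scheme flat over a DVR with uniformizer ϖ, satisfying Serre's condition S₂. Then F/ϖF satisfies Serre's condition S₁, and hence F/ϖF is torsion-free. -/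
/-- Serre's condition `S_n` for a module `M` over a commutative ring `R`, expressed via
regular sequences: for every prime `p` in the support of `M`, there is an `M`-regular
sequence inside `p` of length `min n (dim M_p)`, where `dim M_p` is the height of `p`
in the support of `M`. -/
def SerreCondSn (n : ℕ) (R : Type*) [CommRing R] (M : Type*) [AddCommGroup M]
    [Module R M] : Prop :=
  ∀ (p : PrimeSpectrum R) (hp : Module.annihilator R M ≤ p.asIdeal),
    ∃ rs : List R,
      (rs.length : ℕ∞) =
        min (n : ℕ∞)
          (Order.height
            (⟨p, hp⟩ : {q : PrimeSpectrum R // Module.annihilator R M ≤ q.asIdeal})) ∧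
      (∀ r ∈ rs, r ∈ p.asIdeal) ∧ RingTheory.Sequence.IsRegular M rs

open Pointwise

section AuxLemmas

lemma aux_flat_regular {V : Type*} [CommRing V] {Q : Type*} [AddCommGroup Q] [Module V Q]
    [Module.Flat V Q] {c : V} (hc : IsSMulRegular V c) : IsSMulRegular Q c := by
  have h1 : Function.Injective ((LinearMap.lsmul V V c).lTensor Q) :=
    Module.Flat.lTensor_preserves_injective_linearMap _ (fun a b hab => hc (by simpa using hab))
  have h2 : (LinearMap.lsmul V Q c) =
      (TensorProduct.rid V Q).toLinearMap ∘ₗ ((LinearMap.lsmul V V c).lTensor Q) ∘ₗ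
        (TensorProduct.rid V Q).symm.toLinearMap := by
    ext q
    simp
  have h3 : Function.Injective (LinearMap.lsmul V Q c) := by
    rw [h2]
    simp only [LinearMap.coe_comp, LinearEquiv.coe_coe]
    exact (TensorProduct.rid V Q).injective.comp (h1.comp (TensorProduct.rid V Q).symm.injective)
  intro a b hab
  exact h3 (by simpa using hab)

variable {R : Type*} [CommRing R] {M : Type*} [AddCommGroup M] [Module R M]

lemma aux_mem_span_smul {r : R} {m : M} :
    m ∈ (Ideal.span {r} • ⊤ : Submodule R M) ↔ ∃ m', m = r • m' := by
  rw [Submodule.ideal_span_singleton_smul]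
  constructor
  · intro h
    rw [← SetLike.mem_coe, Submodule.coe_pointwise_smul] at h
    obtain ⟨y, -, hy⟩ := h
    exact ⟨y, hy.symm⟩
  · rintro ⟨m', rfl⟩
    exact Submodule.smul_mem_pointwise_smul m' r ⊤ trivial

lemma auxA {π x y : R} {m : M} (hπ : IsSMulRegular M π)
    (hxy : RingTheory.Sequence.IsWeaklyRegular M [x, y])
    (hxm : ∃ m₁, x • m = π • m₁) (hym : ∃ m₂, y • m = π • m₂) :
    ∃ m₃, m = π • m₃ := by
  obtain ⟨m₁, hm₁⟩ := hxm
  obtain ⟨m₂, hm₂⟩ := hym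
  rw [RingTheory.Sequence.isWeaklyRegular_cons_iff] at hxy
  obtain ⟨hx, hxy⟩ := hxy
  rw [RingTheory.Sequence.isWeaklyRegular_cons_iff] at hxy
  obtain ⟨hy, -⟩ := hxy
  have key : y • m₁ = x • m₂ := by
    apply hπ
    calc π • (y • m₁) = y • (π • m₁) := smul_comm _ _ _
    _ = y • (x • m) := by rw [hm₁]
    _ = x • (y • m) := smul_comm _ _ _
    _ = x • (π • m₂) := by rw [hm₂]
    _ = π • (x • m₂) := smul_comm _ _ _
  have h0 : (Submodule.Quotient.mk m₁ : QuotSMulTop x M) = 0 := by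
    apply hy
    show y • (Submodule.Quotient.mk m₁ : QuotSMulTop x M) = y • 0
    rw [smul_zero, ← Submodule.Quotient.mk_smul, key, Submodule.Quotient.mk_eq_zero]
    exact Submodule.smul_mem_pointwise_smul m₂ x ⊤ trivial
  rw [Submodule.Quotient.mk_eq_zero] at h0
  rw [← SetLike.mem_coe, Submodule.coe_pointwise_smul] at h0
  obtain ⟨m₃, -, hm₃⟩ := h0
  refine ⟨m₃, hx ?_⟩
  show x • m = x • (π • m₃)
  rw [hm₁, ← hm₃, smul_comm]

lemma auxCrux {π : R} (hreg : IsSMulRegular M π) {q : Ideal R}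
    (hq : q ∈ (Module.annihilator R M).minimalPrimes) : π ∉ q := by
  intro hπq
  have hqp : q.IsPrime := hq.1.1
  set B := Localization q.primeCompl with hB
  have hrad : algebraMap R B π ∈ (Ideal.map (algebraMap R B) (Module.annihilator R M)).radical := by
    rw [Ideal.radical_eq_sInf]
    refine Ideal.mem_sInf.mpr ?_
    rintro P ⟨hPle, hPprime⟩
    have hcomap : P.comap (algebraMap R B) ≤ q := by
      intro z hz
      by_contra hzq
      have hu : IsUnit (algebraMap R B z) :=
        IsLocalization.map_units B (⟨z, hzq⟩ : q.primeCompl)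
      exact hPprime.ne_top (Ideal.eq_top_of_isUnit_mem _ hz hu)
    have hle2 : Module.annihilator R M ≤ P.comap (algebraMap R B) :=
      le_trans Ideal.le_comap_map (Ideal.comap_mono hPle)
    have heq : P.comap (algebraMap R B) = q :=
      le_antisymm hcomap (hq.2 ⟨Ideal.IsPrime.comap _ (hK := hPprime), hle2⟩ hcomap)
    exact Ideal.mem_comap.mp (by rw [heq]; exact hπq)
  obtain ⟨n, hn⟩ := Ideal.mem_radical_iff.mp hrad
  rw [← map_pow] at hn
  obtain ⟨⟨⟨a, ha⟩, ⟨s, hs⟩⟩, he⟩ :=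
    (IsLocalization.mem_map_algebraMap_iff q.primeCompl B).mp hn
  rw [← map_mul] at he
  obtain ⟨t, ht⟩ := (IsLocalization.eq_iff_exists q.primeCompl B).mp he
  have hts : (t : R) * s ∈ Module.annihilator R M := by
    rw [Module.mem_annihilator]
    intro m
    have h1 : (π ^ n) • (((t : R) * s) • m) = 0 := by
      have e1 : ((t : R) * (π ^ n * s)) • m = ((t : R) * a) • m := by rw [ht]
      have e2 : ((t : R) * a) • m = 0 := by
        rw [mul_smul, Module.mem_annihilator.mp ha m, smul_zero]
      rw [smul_smul, show π ^ n * ((t : R) * s) = (t : R) * (π ^ n * s) by ring, e1, e2]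
    exact (hreg.pow n) (by rw [h1, smul_zero] :
      (π ^ n) • (((t : R) * s) • m) = (π ^ n) • (0 : M))
  rcases hqp.mem_or_mem (hq.1.2 hts) with h | h
  · exact t.2 h
  · exact hs h

lemma auxC [IsNoetherianRing R] {π : R} (hRreg : IsSMulRegular R π)
    (hrefl : Function.Bijective (Module.Dual.eval R M))
    (hdom : IsDomain (R ⧸ Ideal.span {π}))
    (hne : (Ideal.span {π} • ⊤ : Submodule R M) ≠ ⊤) :
    Module.annihilator R M ≤ Ideal.span {π} := by
  intro a ha
  by_contra haI
  set K : Submodule R R := LinearMap.ker (LinearMap.lsmul R R a) with hKdef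
  have hKmem : ∀ x : R, x ∈ K ↔ a * x = 0 := fun x => by
    simp [hKdef, LinearMap.mem_ker, smul_eq_mul]
  have hK : K ≤ Ideal.span {π} • K := by
    intro x hx
    have hax : a * x = 0 := (hKmem x).mp hx
    have hxI : x ∈ Ideal.span {π} := by
      have h0 : (Ideal.Quotient.mk (Ideal.span {π}) a) * (Ideal.Quotient.mk (Ideal.span {π}) x)
          = 0 := by rw [← map_mul, hax, map_zero]
      rcases mul_eq_zero.mp h0 with h | h
      · exact absurd (Ideal.Quotient.eq_zero_iff_mem.mp h) haI
      · exact Ideal.Quotient.eq_zero_iff_mem.mp h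
    obtain ⟨c, hc⟩ := Ideal.mem_span_singleton'.mp hxI
    have hcK : c ∈ K := by
      rw [hKmem]
      apply hRreg
      show π • (a * c) = π • 0
      rw [smul_zero, smul_eq_mul]
      calc π * (a * c) = a * (c * π) := by ring
      _ = a * x := by rw [hc]
      _ = 0 := hax
    have hx' : x = π • c := by rw [smul_eq_mul, ← hc, mul_comm]
    rw [hx']
    exact Submodule.smul_mem_smul (Ideal.mem_span_singleton_self π) hcK
  obtain ⟨s, hs1, hs0⟩ := Submodule.exists_sub_one_mem_and_smul_eq_zero_of_fg_of_le_smul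
    (Ideal.span {π}) K (IsNoetherian.noetherian K) hK
  have hsM : ∀ m : M, s • m = 0 := by
    intro m
    have h0 : Module.Dual.eval R M (s • m) = Module.Dual.eval R M 0 := by
      apply LinearMap.ext
      intro φ
      have hφm : φ m ∈ K := by
        rw [hKmem, ← smul_eq_mul, ← φ.map_smul, Module.mem_annihilator.mp ha m, φ.map_zero]
      simp only [Module.Dual.eval_apply, map_zero, map_smul]
      exact hs0 (φ m) hφm
    simpa using hrefl.injective h0
  apply hne
  rw [eq_top_iff]
  intro m _
  have h1 : m = -((s - 1) • m) := by
    rw [sub_smul, one_smul, hsM m, zero_sub, neg_neg]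
  rw [h1]
  exact Submodule.neg_mem _ (Submodule.smul_mem_smul hs1 trivial)

/-- Every associated prime of `M/πM` is `(π)`. -/
lemma auxAss [IsNoetherianRing R] [Module.Finite R M] {π : R}
    (hRreg : IsSMulRegular R π) (hMreg : IsSMulRegular M π)
    (hrefl : Function.Bijective (Module.Dual.eval R M))
    (hdom : IsDomain (R ⧸ Ideal.span {π}))
    (hS2 : SerreCondSn 2 R M)
    {q : Ideal R} (hq : IsAssociatedPrime q (M ⧸ (Ideal.span {π} • ⊤ : Submodule R M))) :
    q = Ideal.span {π} := by
  have hIprime : (Ideal.span {π}).IsPrime := (Ideal.Quotient.isDomain_iff_prime _).mp hdom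
  obtain ⟨hqprime, x, hxq⟩ := isAssociatedPrime_iff.mp hq
  have hxne : x ≠ 0 := by
    rintro rfl
    apply hqprime.ne_top
    rw [hxq, eq_top_iff]
    intro r _
    rw [Submodule.mem_colon_singleton, smul_zero]
    exact Submodule.zero_mem _
  obtain ⟨m, rfl⟩ := Submodule.Quotient.mk_surjective _ x
  have hqmem : ∀ z : R, z ∈ q → ∃ m₁, z • m = π • m₁ := by
    intro z hz
    rw [hxq, Submodule.mem_colon_singleton, Submodule.mem_bot, ← Submodule.Quotient.mk_smul,
      Submodule.Quotient.mk_eq_zero] at hz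
    exact aux_mem_span_smul.mp hz
  have hπq : π ∈ q := by
    rw [hxq, Submodule.mem_colon_singleton, Submodule.mem_bot, ← Submodule.Quotient.mk_smul,
      Submodule.Quotient.mk_eq_zero]
    exact aux_mem_span_smul.mpr ⟨m, rfl⟩
  have hIq : Ideal.span {π} ≤ q := by
    rw [Ideal.span_le, Set.singleton_subset_iff]; exact hπq
  by_contra hne
  have hIlt : Ideal.span {π} < q := lt_of_le_of_ne hIq (Ne.symm hne)
  have hNtriv : (Ideal.span {π} • ⊤ : Submodule R M) ≠ ⊤ := by
    intro h
    apply hxne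
    rw [Submodule.Quotient.mk_eq_zero, h]
    trivial
  have hannI : Module.annihilator R M ≤ Ideal.span {π} := auxC hRreg hrefl hdom hNtriv
  obtain ⟨q', hq'min, hq'le⟩ := Ideal.exists_minimalPrimes_le (J := Ideal.span {π}) hannI
  have hπq' : π ∉ q' := auxCrux hMreg hq'min
  have hq'lt : q' < Ideal.span {π} :=
    lt_of_le_of_ne hq'le (fun h => hπq' (h ▸ Ideal.mem_span_singleton_self π))
  have hannq : Module.annihilator R M ≤ q := hannI.trans hIq
  -- height at least 2
  set c0 : {p : PrimeSpectrum R // Module.annihilator R M ≤ p.asIdeal} :=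
    ⟨⟨q', hq'min.1.1⟩, hq'min.1.2⟩ with hc0
  set c1 : {p : PrimeSpectrum R // Module.annihilator R M ≤ p.asIdeal} :=
    ⟨⟨Ideal.span {π}, hIprime⟩, hannI⟩ with hc1
  set c2 : {p : PrimeSpectrum R // Module.annihilator R M ≤ p.asIdeal} :=
    ⟨⟨q, hqprime⟩, hannq⟩ with hc2
  have l01 : c0 < c1 := by
    rw [hc0, hc1, Subtype.mk_lt_mk]
    exact hq'lt
  have l12 : c1 < c2 := by
    rw [hc1, hc2, Subtype.mk_lt_mk]
    exact hIlt
  have hchain : (2 : ℕ∞) ≤ Order.height c2 := by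
    set S : LTSeries {p : PrimeSpectrum R // Module.annihilator R M ≤ p.asIdeal} :=
      ((RelSeries.singleton _ c0).snoc c1 (by simpa using l01)).snoc c2 (by simpa using l12)
      with hS
    have hlast : S.last = c2 := by simp [hS]
    have hlen : S.length = 2 := by simp [hS]
    have := Order.length_le_height_last (p := S)
    rw [hlast, hlen] at this
    exact_mod_cast this
  obtain ⟨rs, hlen, hmem, hregseq⟩ := hS2 ⟨q, hqprime⟩ hannq
  rw [← hc2, show ((2 : ℕ) : ℕ∞) = (2 : ℕ∞) from rfl, min_eq_left hchain] at hlen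
  obtain ⟨x₁, y₁, rfl⟩ := List.length_eq_two.mp (by exact_mod_cast hlen)
  have h1 := hqmem x₁ (hmem x₁ (by simp))
  have h2 := hqmem y₁ (hmem y₁ (by simp))
  obtain ⟨m₃, hm₃⟩ := auxA hMreg hregseq.toIsWeaklyRegular h1 h2
  apply hxne
  rw [Submodule.Quotient.mk_eq_zero]
  exact aux_mem_span_smul.mpr ⟨m₃, hm₃⟩

end AuxLemmas

/-- A reflexive (hence `S₂`) coherent module over a Noetherian ring flat over a DVR,
on which the uniformizer `ϖ` acts regularly, has quotient `M/ϖM` satisfying `S₁`;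
hence `M/ϖM` is torsion-free (over the integral special fiber). -/
theorem stmt16 {V : Type*} [CommRing V] [IsDomain V] [IsDiscreteValuationRing V] (ϖ : V)
    (hϖ : Irreducible ϖ)
    {R : Type*} [CommRing R] [IsNoetherianRing R] [Algebra V R] [Module.Flat V R]
    (M : Type*) [AddCommGroup M] [Module R M] [Module.Finite R M]
    (hrefl : Function.Bijective (Module.Dual.eval R M))
    (hS2 : SerreCondSn 2 R M)
    (hMreg : IsSMulRegular M (algebraMap V R ϖ))
    (hdom : IsDomain (R ⧸ Ideal.span {algebraMap V R ϖ})) :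
    SerreCondSn 1 R (M ⧸ (Ideal.span {algebraMap V R ϖ} • ⊤ : Submodule R M)) ∧
    ∀ r : R,
      IsSMulRegular (R ⧸ Ideal.span {algebraMap V R ϖ})
        (Ideal.Quotient.mk (Ideal.span {algebraMap V R ϖ}) r) →
      IsSMulRegular (M ⧸ (Ideal.span {algebraMap V R ϖ} • ⊤ : Submodule R M)) r := by
  set π : R := algebraMap V R ϖ with hπdef
  set N := M ⧸ (Ideal.span {π} • ⊤ : Submodule R M) with hN
  -- π is regular on R
  have hVreg : IsSMulRegular R (ϖ : V) :=
    aux_flat_regular (V := V) (Q := R)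
      (fun a b hab => mul_left_cancel₀ hϖ.ne_zero (by simpa [smul_eq_mul] using hab))
  have hRreg : IsSMulRegular R π := by
    intro a b hab
    apply hVreg
    simpa [Algebra.smul_def, ← hπdef, smul_eq_mul] using hab
  have hAss : ∀ q : Ideal R, IsAssociatedPrime q N → q = Ideal.span {π} :=
    fun q hq => auxAss hRreg hMreg hrefl hdom hS2 hq
  -- π kills N
  have hπN : ∀ n : N, π • n = 0 := by
    intro n
    obtain ⟨m, rfl⟩ := Submodule.Quotient.mk_surjective _ n
    rw [← Submodule.Quotient.mk_smul, Submodule.Quotient.mk_eq_zero]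
    exact aux_mem_span_smul.mpr ⟨m, rfl⟩
  constructor
  · -- S₁ for N
    intro p hp
    have hNnontriv : Nontrivial N := by
      by_contra h
      rw [not_nontrivial_iff_subsingleton] at h
      have htop : Module.annihilator R N = ⊤ := by
        rw [eq_top_iff]
        intro a _
        rw [Module.mem_annihilator]
        intro n
        exact Subsingleton.elim _ _
      apply p.isPrime.ne_top
      rw [eq_top_iff, ← htop]
      exact hp
    by_cases h0 : Order.height
        (⟨p, hp⟩ : {q : PrimeSpectrum R // Module.annihilator R N ≤ q.asIdeal}) = 0
    · refine ⟨[], ?_, by simp, ?_⟩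
      · rw [h0]
        simp
      · refine ⟨RingTheory.Sequence.IsWeaklyRegular.nil R N, ?_⟩
        rw [Ideal.ofList_nil, Submodule.bot_smul]
        exact top_ne_bot
    · obtain ⟨c, hclt⟩ := not_isMin_iff.mp
        (fun hmin : IsMin (⟨p, hp⟩ :
            {q : PrimeSpectrum R // Module.annihilator R N ≤ q.asIdeal}) =>
          h0 (Order.height_eq_zero.mpr hmin))
      have hlt : c.1.asIdeal < p.asIdeal := Subtype.coe_lt_coe.mpr hclt
      have hπc : π ∈ c.1.asIdeal := by
        apply c.2
        rw [Module.mem_annihilator]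
        exact hπN
      have hIc : Ideal.span {π} ≤ c.1.asIdeal := by
        rw [Ideal.span_le, Set.singleton_subset_iff]; exact hπc
      obtain ⟨r, hrp, hrc⟩ := SetLike.exists_of_lt hlt
      have hrI : r ∉ Ideal.span {π} := fun h => hrc (hIc h)
      have hrreg : IsSMulRegular N r := by
        by_contra hreg
        have : r ∈ ⋃ q ∈ associatedPrimes R N, (q : Set R) := by
          rw [biUnion_associatedPrimes_eq_compl_regular]
          exact hreg
        obtain ⟨q, hqass, hrq⟩ := Set.mem_iUnion₂.mp this
        rw [hAss q hqass] at hrq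
        exact hrI hrq
      refine ⟨[r], ?_, by simpa using hrp, ?_⟩
      · have h1 : (1 : ℕ∞) ≤ Order.height
            (⟨p, hp⟩ : {q : PrimeSpectrum R // Module.annihilator R N ≤ q.asIdeal}) :=
          ENat.one_le_iff_ne_zero.mpr h0
        rw [show ((1 : ℕ) : ℕ∞) = (1 : ℕ∞) from rfl, min_eq_left h1]
        simp
      · refine ⟨(RingTheory.Sequence.isWeaklyRegular_singleton_iff N r).mpr hrreg, ?_⟩
        intro htop
        have hofList : Ideal.ofList [r] = Ideal.span {r} := by
          rw [Ideal.ofList_cons, Ideal.ofList_nil, sup_bot_eq]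
        rw [hofList] at htop
        obtain ⟨s, hs1, hs0⟩ := Submodule.exists_sub_one_mem_and_smul_eq_zero_of_fg_of_le_smul
          (Ideal.span {r}) ⊤ (Module.Finite.fg_top (R := R) (M := N)) (le_of_eq htop)
        have hsp : s ∈ p.asIdeal := by
          apply hp
          rw [Module.mem_annihilator]
          exact fun n => hs0 n trivial
        have hs1p : s - 1 ∈ p.asIdeal := Ideal.span_le.mpr
          (Set.singleton_subset_iff.mpr hrp) hs1
        apply p.isPrime.ne_top
        rw [Ideal.eq_top_iff_one]
        have : (1 : R) = s - (s - 1) := by ring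
        rw [this]
        exact Ideal.sub_mem _ hsp hs1p
  · -- torsion-freeness
    intro r hr
    have hrI : r ∉ Ideal.span {π} := by
      intro h
      have h0 : (Ideal.Quotient.mk (Ideal.span {π})) r = 0 :=
        Ideal.Quotient.eq_zero_iff_mem.mpr h
      rw [h0] at hr
      have h01 : (0 : R ⧸ Ideal.span {π}) • (0 : R ⧸ Ideal.span {π}) = (0 : R ⧸ Ideal.span {π}) • 1 := by
        simp
      exact zero_ne_one (hr h01)
    have key : ∀ n : N, r • n = 0 → n = 0 := by
      intro n hn
      by_contra hne
      obtain ⟨P, hPass, hPle⟩ := exists_le_isAssociatedPrime_of_isNoetherianRing (R := R) n hne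
      have hrP : r ∈ P := hPle (Submodule.mem_colon_singleton.mpr ((Submodule.mem_bot R).mpr hn))
      rw [hAss P hPass] at hrP
      exact hrI hrP
    intro a b hab
    have : r • (a - b) = 0 := by
      rw [smul_sub, show r • a = r • b from hab, sub_self]
    exact sub_eq_zero.mp (key (a - b) this)
end
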